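/- Let Q be a finite subgroup of Houghton's group H_n and let 𝓜^Q = {α ∈ 𝓜 : q ∘ α = α for all q ∈ Q}. Then 𝓜^Q is nonempty, and any two elements of 𝓜^Q have a common upper bound in 𝓜^Q: for all α, β ∈ 𝓜^Q there exist γ ∈ 𝓜^Q and translations t, t′ with γ = α ∘ t = β ∘ t′. Hence the poset (𝓜^Q, ≤), where α ≤ β iff β = α ∘ t for some translation t, is directed (so its geometric realization is contractible). -/

import Mathlib

/-- `f : ℕ × Fin n → ℕ × Fin n` is eventually a translation with translation
vector `m : Fin n → ℤ`: on each ray `ℕ × {x}`, for all sufficiently large `i`,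
`f` sends `(i, x)` to `(i + m x, x)`. -/
def EvTrans (n : ℕ) (f : ℕ × Fin n → ℕ × Fin n) (m : Fin n → ℤ) : Prop :=
  ∀ x : Fin n, ∃ z : ℕ, ∀ i : ℕ, z ≤ i →
    (f (i, x)).2 = x ∧ ((f (i, x)).1 : ℤ) = (i : ℤ) + m x

/-- Houghton's group `H_n`: the subgroup of the symmetric group on
`S = ℕ × Fin n` consisting of the permutations that are eventually
translations on each ray. -/
def Houghton (n : ℕ) : Subgroup (Equiv.Perm (ℕ × Fin n)) where
  carrier := {f : Equiv.Perm (ℕ × Fin n) | ∃ m : Fin n → ℤ, EvTrans n (⇑f) m}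
  one_mem' := ⟨0, fun x => ⟨0, fun i _ => by simp⟩⟩
  mul_mem' := by
    rintro a b ⟨ma, hA⟩ ⟨mb, hB⟩
    refine ⟨ma + mb, fun x => ?_⟩
    obtain ⟨za, hza⟩ := hA x
    obtain ⟨zb, hzb⟩ := hB x
    refine ⟨max zb ((za : ℤ) - mb x).toNat, fun i hi => ?_⟩
    have hib : zb ≤ i := le_trans (le_max_left _ _) hi
    obtain ⟨h2, h1⟩ := hzb i hib
    have hbx : (⇑b) (i, x) = ((b (i, x)).1, x) := Prod.ext_iff.mpr ⟨rfl, h2⟩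
    have hk : za ≤ (b (i, x)).1 := by
      have h3 : ((za : ℤ) - mb x) ≤ (i : ℤ) := by
        calc ((za : ℤ) - mb x) ≤ (((za : ℤ) - mb x).toNat : ℤ) := Int.self_le_toNat _
          _ ≤ (i : ℤ) := by exact_mod_cast le_trans (le_max_right _ _) hi
      have h4 : (za : ℤ) ≤ ((b (i, x)).1 : ℤ) := by rw [h1]; linarith
      exact_mod_cast h4
    obtain ⟨h4, h5⟩ := hza (b (i, x)).1 hk
    constructor
    · show ((a * b) (i, x)).2 = x
      rw [Equiv.Perm.mul_apply, hbx]
      exact h4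
    · show (((a * b) (i, x)).1 : ℤ) = (i : ℤ) + (ma + mb) x
      rw [Equiv.Perm.mul_apply, hbx, h5, h1, Pi.add_apply]
      ring
  inv_mem' := by
    rintro a ⟨m, hm⟩
    refine ⟨-m, fun x => ?_⟩
    obtain ⟨z, hz⟩ := hm x
    refine ⟨((z : ℤ) + m x).toNat, fun i hi => ?_⟩
    have h1 : (z : ℤ) + m x ≤ (i : ℤ) :=
      le_trans (Int.self_le_toNat _) (by exact_mod_cast hi)
    have h0 : (0 : ℤ) ≤ (i : ℤ) - m x := by
      have hz0 : (0 : ℤ) ≤ (z : ℤ) := Int.natCast_nonneg z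
      linarith
    set j := ((i : ℤ) - m x).toNat with hjdef
    have hj' : (j : ℤ) = (i : ℤ) - m x := Int.toNat_of_nonneg h0
    have hjz : z ≤ j := by
      have : (z : ℤ) ≤ (j : ℤ) := by rw [hj']; linarith
      exact_mod_cast this
    obtain ⟨h2, h3⟩ := hz j hjz
    have hfst : (a (j, x)).1 = i := by
      have : ((a (j, x)).1 : ℤ) = (i : ℤ) := by rw [h3, hj']; ring
      exact_mod_cast this
    have hfix : (⇑a) (j, x) = (i, x) := Prod.ext_iff.mpr ⟨hfst, h2⟩
    have hinv : (⇑a⁻¹) (i, x) = (j, x) := by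
      rw [← hfix]
      exact Equiv.symm_apply_apply a (j, x)
    constructor
    · rw [hinv]
    · rw [hinv]
      show (j : ℤ) = (i : ℤ) + (-m) x
      rw [hj', Pi.neg_apply]
      ring

/-- A translation of `S = ℕ × Fin n`: a map of the form
`(i, x) ↦ (i + k x, x)` with `k : Fin n → ℕ`. -/
def IsHTranslation (n : ℕ) (t : ℕ × Fin n → ℕ × Fin n) : Prop :=
  ∃ k : Fin n → ℕ, ∀ (i : ℕ) (x : Fin n), t (i, x) = (i + k x, x)

/-- The monoid `𝓜` of injective maps `S → S` that are eventually
translations. -/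
def HMonoid (n : ℕ) : Set ((ℕ × Fin n) → (ℕ × Fin n)) :=
  {α | Function.Injective α ∧ ∃ m : Fin n → ℤ, EvTrans n α m}

lemma evtrans_comp {n : ℕ} {f g : ℕ × Fin n → ℕ × Fin n} {mf mg : Fin n → ℤ}
    (hA : EvTrans n f mf) (hB : EvTrans n g mg) : EvTrans n (f ∘ g) (mf + mg) := by
  intro x
  obtain ⟨za, hza⟩ := hA x
  obtain ⟨zb, hzb⟩ := hB x
  refine ⟨max zb ((za : ℤ) - mg x).toNat, fun i hi => ?_⟩
  have hib : zb ≤ i := le_trans (le_max_left _ _) hi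
  obtain ⟨h2, h1⟩ := hzb i hib
  have hbx : g (i, x) = ((g (i, x)).1, x) := Prod.ext_iff.mpr ⟨rfl, h2⟩
  have hk : za ≤ (g (i, x)).1 := by
    have h3 : ((za : ℤ) - mg x) ≤ (i : ℤ) := by
      calc ((za : ℤ) - mg x) ≤ (((za : ℤ) - mg x).toNat : ℤ) := Int.self_le_toNat _
        _ ≤ (i : ℤ) := by exact_mod_cast le_trans (le_max_right _ _) hi
    have h4 : (za : ℤ) ≤ ((g (i, x)).1 : ℤ) := by rw [h1]; linarith
    exact_mod_cast h4
  obtain ⟨h4, h5⟩ := hza (g (i, x)).1 hk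
  constructor
  · show (f (g (i, x))).2 = x
    rw [hbx]; exact h4
  · show ((f (g (i, x))).1 : ℤ) = (i : ℤ) + (mf + mg) x
    rw [hbx, h5, h1, Pi.add_apply]; ring

lemma evtrans_pow {n : ℕ} (q : Equiv.Perm (ℕ × Fin n)) (m : Fin n → ℤ)
    (h : EvTrans n (⇑q) m) : ∀ N : ℕ, EvTrans n (⇑(q ^ N)) ((N : ℤ) • m)
  | 0 => fun x => ⟨0, fun i _ => by simp⟩
  | (N + 1) => by
      have key := evtrans_comp (evtrans_pow q m h N) h
      have h1 : ⇑(q ^ (N + 1)) = ⇑(q ^ N) ∘ ⇑q := by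
        funext p; simp [pow_succ, Equiv.Perm.mul_apply]
      have h2 : ((N + 1 : ℕ) : ℤ) • m = (N : ℤ) • m + m := by
        push_cast; rw [add_smul, one_smul]
      rw [h1, h2]; exact key

lemma evtrans_fix_of_pow_eq_one {n : ℕ} (q : Equiv.Perm (ℕ × Fin n)) (m : Fin n → ℤ)
    (h : EvTrans n (⇑q) m) (N : ℕ) (hN : N ≠ 0) (hq : q ^ N = 1) :
    ∃ z : ℕ, ∀ (x : Fin n) (i : ℕ), z ≤ i → q (i, x) = (i, x) := by
  have hm0 : ∀ x, m x = 0 := by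
    intro x
    have hp := evtrans_pow q m h N x
    rw [hq] at hp
    obtain ⟨z, hz⟩ := hp
    have h2 := (hz z le_rfl).2
    simp only [Equiv.Perm.coe_one, id_eq, Pi.smul_apply, smul_eq_mul] at h2
    have hNz : (N : ℤ) ≠ 0 := by exact_mod_cast hN
    have : (N : ℤ) * m x = 0 := by linarith
    rcases mul_eq_zero.mp this with h | h
    · exact absurd h hNz
    · exact h
  choose zf hzf using h
  refine ⟨Finset.univ.sup zf, fun x i hi => ?_⟩
  have hx : zf x ≤ i := le_trans (Finset.le_sup (Finset.mem_univ x)) hi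
  obtain ⟨h1, h2⟩ := hzf x i hx
  rw [hm0 x, add_zero] at h2
  have hfst : (q (i, x)).1 = i := by exact_mod_cast h2
  exact Prod.ext_iff.mpr ⟨hfst, h1⟩

/-- If `Q` is a finite subgroup of Houghton's group `H_n`,
then the fixed-point set `𝓜^Q = {α ∈ 𝓜 | q ∘ α = α for all q ∈ Q}` is
nonempty, and any two of its elements have a common upper bound in `𝓜^Q`:
for `α, β ∈ 𝓜^Q` there are `γ ∈ 𝓜^Q` and translations `t, t'` with
`γ = α ∘ t = β ∘ t'`.  Hence the poset `(𝓜^Q, ≤)` is directed (so its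
geometric realization is contractible). -/
theorem houghton_monoid_fixed_points_directed (n : ℕ) (hn : 1 ≤ n)
    (Q : Subgroup (Equiv.Perm (ℕ × Fin n))) (hQ : Q ≤ Houghton n)
    (hfin : Finite Q) :
    (∃ α ∈ HMonoid n, ∀ q ∈ Q, ⇑q ∘ α = α) ∧
    ∀ α ∈ HMonoid n, (∀ q ∈ Q, ⇑q ∘ α = α) →
      ∀ β ∈ HMonoid n, (∀ q ∈ Q, ⇑q ∘ β = β) →
        ∃ γ ∈ HMonoid n, (∀ q ∈ Q, ⇑q ∘ γ = γ) ∧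
          ∃ t t' : (ℕ × Fin n) → (ℕ × Fin n),
            IsHTranslation n t ∧ IsHTranslation n t' ∧
            γ = α ∘ t ∧ γ = β ∘ t' := by
  classical
  have _inst : Fintype Q := Fintype.ofFinite Q
  have key : ∀ q : Q, ∃ z : ℕ, ∀ (x : Fin n) (i : ℕ), z ≤ i →
      (q : Equiv.Perm (ℕ × Fin n)) (i, x) = (i, x) := by
    intro q
    obtain ⟨m, hm⟩ := hQ q.2
    have hN : (q : Equiv.Perm (ℕ × Fin n)) ^ (orderOf q) = 1 := by
      rw [← Subgroup.coe_pow, pow_orderOf_eq_one, OneMemClass.coe_one]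
    exact evtrans_fix_of_pow_eq_one _ m hm (orderOf q) (orderOf_pos q).ne' hN
  choose zQ hzQ using key
  have hZ : ∀ q ∈ Q, ∀ (x : Fin n) (i : ℕ), Finset.univ.sup zQ ≤ i →
      q (i, x) = (i, x) := by
    intro q hq x i hi
    exact hzQ ⟨q, hq⟩ x i (le_trans (Finset.le_sup (Finset.mem_univ _)) hi)
  set Z : ℕ := Finset.univ.sup zQ with hZdef
  constructor
  · refine ⟨fun p => (p.1 + Z, p.2), ⟨?_, ⟨fun _ => (Z : ℤ),
      fun x => ⟨0, fun i _ => ⟨rfl, by push_cast; ring⟩⟩⟩⟩, ?_⟩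
    · intro p q h
      replace h : ((p.1 + Z, p.2) : ℕ × Fin n) = (q.1 + Z, q.2) := h
      simp only [Prod.mk.injEq] at h
      obtain ⟨h1, h2⟩ := h
      exact Prod.ext_iff.mpr ⟨Nat.add_right_cancel h1, h2⟩
    · intro q hq
      funext p
      show q (p.1 + Z, p.2) = (p.1 + Z, p.2)
      exact hZ q hq p.2 (p.1 + Z) (Nat.le_add_left _ _)
  · rintro α ⟨hαinj, mα, hα⟩ hαQ β ⟨hβinj, mβ, hβ⟩ hβQ
    choose zα hzα using hα
    choose zβ hzβ using hβ
    obtain ⟨C, k, k', hCk, hCk'⟩ :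
        ∃ C k k' : Fin n → ℕ,
          (∀ x, zα x ≤ k x ∧ (k x : ℤ) + mα x = C x) ∧
          (∀ x, zβ x ≤ k' x ∧ (k' x : ℤ) + mβ x = C x) := by
      refine ⟨fun x => ((zα x : ℤ) + |mα x| + (zβ x : ℤ) + |mβ x|).toNat,
              fun x => ((zα x : ℤ) + |mα x| + (zβ x : ℤ) + |mβ x| - mα x).toNat,
              fun x => ((zα x : ℤ) + |mα x| + (zβ x : ℤ) + |mβ x| - mβ x).toNat,
              fun x => ?_, fun x => ?_⟩ <;>
      · have h1 := neg_abs_le (mα x)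
        have h2 := le_abs_self (mα x)
        have h3 := neg_abs_le (mβ x)
        have h4 := le_abs_self (mβ x)
        have h5 : (0 : ℤ) ≤ (zα x : ℤ) := Int.natCast_nonneg _
        have h6 : (0 : ℤ) ≤ (zβ x : ℤ) := Int.natCast_nonneg _
        constructor
        · have : ((zα x : ℤ) ⊔ (zβ x : ℤ)) ≤ _ := le_refl _
          have hcast : ((zα x : ℤ)) ≤
              ((((zα x : ℤ) + |mα x| + (zβ x : ℤ) + |mβ x| - mα x).toNat : ℤ)) ∧
              ((zβ x : ℤ)) ≤
              ((((zα x : ℤ) + |mα x| + (zβ x : ℤ) + |mβ x| - mβ x).toNat : ℤ)) := by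
            constructor <;> · rw [Int.toNat_of_nonneg (by linarith)]; linarith
          first
          | exact_mod_cast hcast.1
          | exact_mod_cast hcast.2
        · rw [Int.toNat_of_nonneg (by linarith), Int.toNat_of_nonneg (by linarith)]
          ring
    have hγα : (fun p : ℕ × Fin n => (p.1 + C p.2, p.2)) =
        α ∘ (fun p => (p.1 + k p.2, p.2)) := by
      funext p
      obtain ⟨i, x⟩ := p
      have hle : zα x ≤ i + k x := le_trans (hCk x).1 (Nat.le_add_left _ _)
      obtain ⟨h1, h2⟩ := hzα x (i + k x) hle
      show (i + C x, x) = α (i + k x, x)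
      have hfst : (α (i + k x, x)).1 = i + C x := by
        have hcast : ((α (i + k x, x)).1 : ℤ) = ((i + C x : ℕ) : ℤ) := by
          rw [h2]; push_cast; rw [← (hCk x).2]; ring
        exact_mod_cast hcast
      exact (Prod.ext_iff.mpr ⟨hfst, h1⟩).symm
    have hγβ : (fun p : ℕ × Fin n => (p.1 + C p.2, p.2)) =
        β ∘ (fun p => (p.1 + k' p.2, p.2)) := by
      funext p
      obtain ⟨i, x⟩ := p
      have hle : zβ x ≤ i + k' x := le_trans (hCk' x).1 (Nat.le_add_left _ _)
      obtain ⟨h1, h2⟩ := hzβ x (i + k' x) hle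
      show (i + C x, x) = β (i + k' x, x)
      have hfst : (β (i + k' x, x)).1 = i + C x := by
        have hcast : ((β (i + k' x, x)).1 : ℤ) = ((i + C x : ℕ) : ℤ) := by
          rw [h2]; push_cast; rw [← (hCk' x).2]; ring
        exact_mod_cast hcast
      exact (Prod.ext_iff.mpr ⟨hfst, h1⟩).symm
    refine ⟨fun p => (p.1 + C p.2, p.2),
      ⟨?_, ⟨fun x => (C x : ℤ), fun x => ⟨0, fun i _ => ⟨rfl, by push_cast; ring⟩⟩⟩⟩,
      ?_, (fun p => (p.1 + k p.2, p.2)), (fun p => (p.1 + k' p.2, p.2)),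
      ⟨k, fun i x => rfl⟩, ⟨k', fun i x => rfl⟩, hγα, hγβ⟩
    · intro p q h
      replace h : ((p.1 + C p.2, p.2) : ℕ × Fin n) = (q.1 + C q.2, q.2) := h
      simp only [Prod.mk.injEq] at h
      obtain ⟨h1, h2⟩ := h
      rw [h2] at h1
      exact Prod.ext_iff.mpr ⟨Nat.add_right_cancel h1, h2⟩
    · intro q hq
      calc ⇑q ∘ (fun p : ℕ × Fin n => (p.1 + C p.2, p.2))
          = ⇑q ∘ (α ∘ (fun p => (p.1 + k p.2, p.2))) := by rw [hγα]
        _ = (⇑q ∘ α) ∘ (fun p => (p.1 + k p.2, p.2)) := rfl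
        _ = α ∘ (fun p => (p.1 + k p.2, p.2)) := by rw [hαQ q hq]
        _ = _ := hγα.symm
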